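/- Let y = RS(x, α, β) with 1 ≥ α > β ≥ 0. If y^t = 0 and y^{t+1} = 1 (a 0→1 jump), then there exist times t1 ≤ t < t2 ≤ T such that x^{t1} ≤ β, x^{t2} ≥ α, and β < x^s < α for all s with t1 < s < t2; in particular x^{t2} − x^{t1} ≥ α − β. -/
import Mathlib


/- The two-threshold rounding scheme `RS`.  Given a time horizon `T`, a sequence
`x : ℕ → ℝ` (indices `0, …, T-1`) of values in `[0,1]` and thresholds `α ≥ β`,
it produces a `{0,1}`-valued sequence `y`:
* if `x t ≥ α` then `y t = 1`;
* if `x t ≤ β` then `y t = 0`;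
* on a maximal interval `[t₁,t₂]` with `β < x < α` throughout, `y = 1` iff both
  (`t₁ = 0` or `x (t₁-1) ≥ α`) and (`t₂ = T-1` or `x (t₂+1) ≥ α`);
  this is expressed below by saying that the nearest non-strict index on each
  side (within the horizon), when it exists, carries a value `≥ α`. -/
open Classical in
noncomputable def RS (T : ℕ) (x : ℕ → ℝ) (α β : ℝ) (t : ℕ) : ℝ :=
  if α ≤ x t then 1
  else if x t ≤ β then 0
  else if ((∀ s, s ≤ t → β < x s ∧ x s < α) ∨
           (∃ s, s < t ∧ α ≤ x s ∧ ∀ u, s < u → u ≤ t → β < x u ∧ x u < α)) ∧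
          ((∀ s, t ≤ s → s < T → β < x s ∧ x s < α) ∨
           (∃ s, t < s ∧ s < T ∧ α ≤ x s ∧ ∀ u, t ≤ u → u < s → β < x u ∧ x u < α))
  then 1 else 0

/-- a `0 → 1` jump of `y = RS(x,α,β)` between `t` and `t+1` is
witnessed by times `t₁ ≤ t < t₂` with `x^{t₁} ≤ β`, `x^{t₂} ≥ α` and
`β < x < α` strictly between them; in particular `x^{t₂} - x^{t₁} ≥ α - β`. -/
theorem stmt_3 (T : ℕ) (x : ℕ → ℝ) (α β : ℝ)
    (hx : ∀ t, t < T → 0 ≤ x t ∧ x t ≤ 1)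
    (hα : α ≤ 1) (hαβ : β < α) (hβ : 0 ≤ β)
    (t : ℕ) (ht : t + 1 < T)
    (h0 : RS T x α β t = 0) (h1 : RS T x α β (t + 1) = 1) :
    ∃ t₁ t₂, t₁ ≤ t ∧ t < t₂ ∧ t₂ < T ∧ x t₁ ≤ β ∧ α ≤ x t₂ ∧
      (∀ s, t₁ < s → s < t₂ → β < x s ∧ x s < α) ∧
      α - β ≤ x t₂ - x t₁ := by
  classical
  unfold RS at h0 h1
  by_cases hxt : α ≤ x t
  · simp [hxt] at h0
  rw [if_neg hxt] at h0
  by_cases hxt1 : α ≤ x (t+1)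
  · -- t₂ = t+1
    by_cases hxtb : x t ≤ β
    · refine ⟨t, t+1, le_refl t, Nat.lt_succ_self t, ht, hxtb, hxt1, ?_, by linarith⟩
      intro s hs hs'; omega
    · rw [if_neg hxtb] at h0
      have hts : β < x t ∧ x t < α := ⟨lt_of_not_ge hxtb, lt_of_not_ge hxt⟩
      have hC : ¬ (((∀ s, s ≤ t → β < x s ∧ x s < α) ∨
           (∃ s, s < t ∧ α ≤ x s ∧ ∀ u, s < u → u ≤ t → β < x u ∧ x u < α)) ∧
          ((∀ s, t ≤ s → s < T → β < x s ∧ x s < α) ∨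
           (∃ s, t < s ∧ s < T ∧ α ≤ x s ∧ ∀ u, t ≤ u → u < s → β < x u ∧ x u < α))) := by
        intro hc; rw [if_pos hc] at h0; norm_num at h0
      have hR : (∀ s, t ≤ s → s < T → β < x s ∧ x s < α) ∨
           (∃ s, t < s ∧ s < T ∧ α ≤ x s ∧ ∀ u, t ≤ u → u < s → β < x u ∧ x u < α) := by
        right
        exact ⟨t+1, Nat.lt_succ_self t, ht, hxt1, fun u hu hu' => by
          have : u = t := by omega
          rwa [this]⟩
      have hL : ¬ ((∀ s, s ≤ t → β < x s ∧ x s < α) ∨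
           (∃ s, s < t ∧ α ≤ x s ∧ ∀ u, s < u → u ≤ t → β < x u ∧ x u < α)) :=
        fun hl => hC ⟨hl, hR⟩
      obtain ⟨hL1, hL2⟩ := not_or.1 hL
      simp only [not_forall] at hL1
      obtain ⟨s₀, hs₀⟩ := hL1
      obtain ⟨hs₀t, hs₀⟩ := hs₀
      set P : ℕ → Prop := fun s => ¬ (β < x s ∧ x s < α) with hP
      set m := Nat.findGreatest P t with hm
      have hPm : P m := Nat.findGreatest_spec hs₀t hs₀
      have hmt : m ≤ t := Nat.findGreatest_le t
      have hstrict : ∀ u, m < u → u ≤ t → β < x u ∧ x u < α := fun u hu hu' =>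
        not_not.1 (Nat.findGreatest_is_greatest hu hu')
      have hmltt : m < t := lt_of_le_of_ne hmt (fun h => hPm (by rw [h]; exact hts))
      have hxm : x m ≤ β := by
        by_contra hb
        have : α ≤ x m := by
          rcases le_or_gt α (x m) with h | h
          · exact h
          · exact absurd ⟨lt_of_not_ge hb, h⟩ hPm
        exact hL2 ⟨m, hmltt, this, fun u hu hu' => hstrict u hu hu'⟩
      refine ⟨m, t+1, hmt, Nat.lt_succ_self t, ht, hxm, hxt1, ?_, by linarith⟩
      intro s hs hs'
      exact hstrict s hs (by omega)
  · -- x (t+1) < α; show contradiction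
    exfalso
    rw [if_neg hxt1] at h1
    by_cases hxb1 : x (t+1) ≤ β
    · rw [if_pos hxb1] at h1; norm_num at h1
    rw [if_neg hxb1] at h1
    have hC' : ((∀ s, s ≤ t+1 → β < x s ∧ x s < α) ∨
           (∃ s, s < t+1 ∧ α ≤ x s ∧ ∀ u, s < u → u ≤ t+1 → β < x u ∧ x u < α)) ∧
          ((∀ s, t+1 ≤ s → s < T → β < x s ∧ x s < α) ∨
           (∃ s, t+1 < s ∧ s < T ∧ α ≤ x s ∧ ∀ u, t+1 ≤ u → u < s → β < x u ∧ x u < α)) := by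
      by_contra hc; rw [if_neg hc] at h1; norm_num at h1
    obtain ⟨hL', hR'⟩ := hC'
    by_cases hxtb : x t ≤ β
    · rcases hL' with h | ⟨s, hs, hsa, hsu⟩
      · have := (h t (by omega)).1; linarith
      · rcases Nat.lt_or_ge s t with h | h
        · have := (hsu t h (by omega)).1; linarith
        · have : s = t := by omega
          rw [this] at hsa; linarith
    · have hts : β < x t ∧ x t < α := ⟨lt_of_not_ge hxtb, lt_of_not_ge hxt⟩
      rw [if_neg hxtb] at h0
      have hL : (∀ s, s ≤ t → β < x s ∧ x s < α) ∨
           (∃ s, s < t ∧ α ≤ x s ∧ ∀ u, s < u → u ≤ t → β < x u ∧ x u < α) := by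
        rcases hL' with h | ⟨s, hs, hsa, hsu⟩
        · exact Or.inl fun s hs => h s (by omega)
        · right
          have hst : s < t := by
            rcases Nat.lt_or_ge s t with h | h
            · exact h
            · have : s = t := by omega
              rw [this] at hsa; linarith [hts.2]
          exact ⟨s, hst, hsa, fun u hu hu' => hsu u hu (by omega)⟩
      have hR : (∀ s, t ≤ s → s < T → β < x s ∧ x s < α) ∨
           (∃ s, t < s ∧ s < T ∧ α ≤ x s ∧ ∀ u, t ≤ u → u < s → β < x u ∧ x u < α) := by
        rcases hR' with h | ⟨s, hs, hsT, hsa, hsu⟩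
        · left; intro s hs hsT
          rcases Nat.eq_or_lt_of_le hs with rfl | h'
          · exact hts
          · exact h s h' hsT
        · right
          refine ⟨s, by omega, hsT, hsa, fun u hu hu' => ?_⟩
          rcases Nat.eq_or_lt_of_le hu with rfl | h'
          · exact hts
          · exact hsu u h' hu'
      rw [if_pos ⟨hL, hR⟩] at h0; norm_num at h0
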